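/- Let A and H be groups, φ : A →* H an injective homomorphism, n : ℕ, and let G = Monoid.PushoutI (fun _ : Fin n => φ) be the star of isomorphic groups with n rays, with ray-permuting homomorphisms Φ σ : G →* G for σ : Equiv.Perm (Fin n). Assume that for every nontrivial a ∈ A, Subgroup.centralizer {base a} ≤ base.range. Suppose h ∈ G admits a reduced word datum of length m ≥ 2. Then there exists a finset T of permutations of Fin n with T.card = (n − 2) / 2 (natural-number operations, i.e. ⌊(n−2)/2⌋) such that for all σ, τ ∈ T with σ ≠ τ, the elements Φ σ h and Φ τ h do not commute: Φ σ h * Φ τ h ≠ Φ τ h * Φ σ h. -/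

import Mathlib

open Monoid

/-- A reduced word datum of length `l.length` for an element `g` of the star of isomorphic
groups `Monoid.PushoutI (fun _ : Fin n => φ)`. -/
def IsReducedDatum {A H : Type*} [Group A] [Group H] {n : ℕ} (φ : A →* H)
    (g : Monoid.PushoutI (fun _ : Fin n => φ)) (a : A) (l : List (Fin n × H)) : Prop :=
  (∀ p ∈ l, p.2 ∉ Set.range φ) ∧
  l.Chain' (fun p q => p.1 ≠ q.1) ∧
  g = Monoid.PushoutI.base (fun _ : Fin n => φ) a *
      (l.map fun p => Monoid.PushoutI.of (φ := fun _ : Fin n => φ) p.1 p.2).prod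

section Aux

variable {A H : Type*} [Group A] [Group H] {n : ℕ} {φ : A →* H}

/-- Build a `CoprodI.Word` from a reduced list datum. -/
private def mkWord (l : List (Fin n × H))
    (h1 : ∀ p ∈ l, p.2 ∉ Set.range φ) (c : l.Chain' fun p q => p.1 ≠ q.1) :
    Monoid.CoprodI.Word (fun _ : Fin n => H) where
  toList := l.map fun p => ⟨p.1, p.2⟩
  ne_one := by
    intro x hx
    simp only [List.mem_map] at hx
    obtain ⟨p, hp, rfl⟩ := hx
    intro h1'
    exact h1 p hp ⟨1, by simpa using h1'.symm⟩
  chain_ne := by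
    rw [List.isChain_map]
    exact c

private lemma mkWord_reduced (l : List (Fin n × H))
    (h1 : ∀ p ∈ l, p.2 ∉ Set.range φ) (c : l.Chain' fun p q => p.1 ≠ q.1) :
    Monoid.PushoutI.Reduced (fun _ : Fin n => φ) (mkWord l h1 c) := by
  intro g hg
  simp only [mkWord, List.mem_map] at hg
  obtain ⟨p, hp, rfl⟩ := hg
  intro hr
  rcases hr with ⟨b, hb⟩
  exact h1 p hp ⟨b, hb⟩

private lemma mkWord_prod (l : List (Fin n × H))
    (h1 : ∀ p ∈ l, p.2 ∉ Set.range φ) (c : l.Chain' fun p q => p.1 ≠ q.1) :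
    Monoid.PushoutI.ofCoprodI ((mkWord l h1 c).prod) =
      (l.map fun p => Monoid.PushoutI.of (φ := fun _ : Fin n => φ) p.1 p.2).prod := by
  simp only [Monoid.CoprodI.Word.prod, mkWord, List.map_map, map_list_prod]
  simp [Function.comp_def, Monoid.PushoutI.ofCoprodI_of]

private lemma mkWord_fst (l : List (Fin n × H))
    (h1 : ∀ p ∈ l, p.2 ∉ Set.range φ) (c : l.Chain' fun p q => p.1 ≠ q.1) :
    (mkWord l h1 c).toList.map Sigma.fst = l.map Prod.fst := by
  simp [mkWord, List.map_map, Function.comp_def]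

/-- Uniqueness of the index sequence of a reduced word. -/
private lemma fst_eq_of_prod_eq (hφ : Function.Injective φ) {l₁ l₂ : List (Fin n × H)}
    (h1 : ∀ p ∈ l₁, p.2 ∉ Set.range φ) (c1 : l₁.Chain' fun p q => p.1 ≠ q.1)
    (h2 : ∀ p ∈ l₂, p.2 ∉ Set.range φ) (c2 : l₂.Chain' fun p q => p.1 ≠ q.1)
    (heq : (l₁.map fun p => Monoid.PushoutI.of (φ := fun _ : Fin n => φ) p.1 p.2).prod =
           (l₂.map fun p => Monoid.PushoutI.of (φ := fun _ : Fin n => φ) p.1 p.2).prod) :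
    l₁.map Prod.fst = l₂.map Prod.fst := by
  classical
  obtain ⟨d⟩ := Monoid.PushoutI.NormalWord.transversal_nonempty (fun _ : Fin n => φ) (fun _ => hφ)
  obtain ⟨w₁, hw₁p, hw₁m⟩ := (mkWord_reduced l₁ h1 c1).exists_normalWord_prod_eq d
  obtain ⟨w₂, hw₂p, hw₂m⟩ := (mkWord_reduced l₂ h2 c2).exists_normalWord_prod_eq d
  have hw : w₁ = w₂ := by
    apply Monoid.PushoutI.NormalWord.prod_injective
    rw [hw₁p, hw₂p, mkWord_prod, mkWord_prod, heq]
  rw [← mkWord_fst l₁ h1 c1, ← mkWord_fst l₂ h2 c2, ← hw₁m, ← hw₂m, hw]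

private lemma exists_perm_pair {n : ℕ} (i j u v : Fin n) (huv : u ≠ v) :
    ∃ σ : Equiv.Perm (Fin n), σ i = u ∧ (σ j = u ∨ σ j = v) := by
  by_cases hij : i = j
  · subst hij
    exact ⟨Equiv.swap i u, Equiv.swap_apply_left i u, Or.inl (Equiv.swap_apply_left i u)⟩
  · refine ⟨(Equiv.swap i u).trans (Equiv.swap ((Equiv.swap i u) j) v), ?_, Or.inr ?_⟩
    · simp only [Equiv.trans_apply, Equiv.swap_apply_left]
      apply Equiv.swap_apply_of_ne_of_ne
      · intro hu
        apply hij
        have : Equiv.swap i u j = Equiv.swap i u i := by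
          rw [Equiv.swap_apply_left, ← hu]
        exact ((Equiv.swap i u).injective this).symm ▸ rfl
      · exact huv
    · simp [Equiv.trans_apply]

end Aux

/-- The main claim in the proof of Lemma 3.3 (OrbitsCosets): in a star of isomorphic
groups with `n` rays in which centralizers of nontrivial elements of the amalgamated
subgroup lie in the amalgamated subgroup, for a reduced word `h` of length at least `2`
there are `⌊(n-2)/2⌋` ray permutations whose images of `h` pairwise fail to commute. -/
theorem images_pairwise_not_commute {A H : Type*} [Group A] [Group H]
    (φ : A →* H) (hφ : Function.Injective φ) (n : ℕ)
    (Φ : Equiv.Perm (Fin n) →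
      (Monoid.PushoutI (fun _ : Fin n => φ) →* Monoid.PushoutI (fun _ : Fin n => φ)))
    (hΦ : ∀ (σ : Equiv.Perm (Fin n)) (i : Fin n),
      (Φ σ).comp (Monoid.PushoutI.of (φ := fun _ : Fin n => φ) i) =
        Monoid.PushoutI.of (φ := fun _ : Fin n => φ) (σ i))
    (hcent : ∀ a : A, a ≠ 1 →
      Subgroup.centralizer {Monoid.PushoutI.base (fun _ : Fin n => φ) a} ≤
        (Monoid.PushoutI.base (fun _ : Fin n => φ)).range)
    (h : Monoid.PushoutI (fun _ : Fin n => φ)) (a : A) (l : List (Fin n × H)) (m : ℕ)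
    (hlen : l.length = m) (hm : 2 ≤ m)
    (hred : IsReducedDatum φ h a l) :
    ∃ T : Finset (Equiv.Perm (Fin n)), T.card = (n - 2) / 2 ∧
      ∀ σ ∈ T, ∀ τ ∈ T, σ ≠ τ → Φ σ h * Φ τ h ≠ Φ τ h * Φ σ h := by
  classical
  obtain ⟨hr, hc, hprod⟩ := hred
  obtain ⟨p, l', rfl⟩ : ∃ p l', l = p :: l' := by
    cases l with
    | nil => simp at hlen; omega
    | cons p l' => exact ⟨p, l', rfl⟩
  set f : Fin n × H → Monoid.PushoutI (fun _ : Fin n => φ) :=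
    fun q => Monoid.PushoutI.of (φ := fun _ : Fin n => φ) q.1 q.2 with hf
  set l₀ : List (Fin n × H) := (p.1, φ a * p.2) :: l' with hl₀
  set i₁ : Fin n := p.1 with hi₁
  set im : Fin n := (l₀.getLast (List.cons_ne_nil _ _)).1 with him
  have r₀ : ∀ q ∈ l₀, q.2 ∉ Set.range φ := by
    intro q hq
    rcases List.mem_cons.1 hq with rfl | hq
    · rintro ⟨b, hb⟩
      exact hr p List.mem_cons_self ⟨a⁻¹ * b, by
        rw [map_mul, map_inv, hb]; group⟩
    · exact hr q (List.mem_cons_of_mem _ hq)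
  have c₀ : l₀.Chain' (fun q q' => q.1 ≠ q'.1) := by
    rw [hl₀]
    unfold List.Chain' at hc ⊢
    rw [List.isChain_cons]
    rw [List.isChain_cons] at hc
    exact hc
  have hPl₀ : h = (l₀.map f).prod := by
    rw [hprod, hl₀]
    simp only [List.map_cons, List.prod_cons, ← mul_assoc, hf]
    congr 2
    rw [← Monoid.PushoutI.of_apply_eq_base (fun _ : Fin n => φ) p.1 a, ← map_mul]
  have hΦof : ∀ (σ : Equiv.Perm (Fin n)) (i : Fin n) (x : H),
      Φ σ (Monoid.PushoutI.of (φ := fun _ : Fin n => φ) i x) =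
        Monoid.PushoutI.of (φ := fun _ : Fin n => φ) (σ i) x := by
    intro σ i x
    have := DFunLike.congr_fun (hΦ σ i) x
    simpa using this
  set L : Equiv.Perm (Fin n) → List (Fin n × H) :=
    fun σ => l₀.map (fun q => (σ q.1, q.2)) with hL
  have hΦh : ∀ σ, Φ σ h = ((L σ).map f).prod := by
    intro σ
    rw [hPl₀, map_list_prod]
    simp only [hL, List.map_map]
    refine congrArg List.prod (List.map_congr_left ?_)
    intro q hq
    simp [hf, Function.comp_def, hΦof]
  have rL : ∀ σ, ∀ q ∈ L σ, q.2 ∉ Set.range φ := by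
    intro σ q hq
    simp only [hL, List.mem_map] at hq
    obtain ⟨q', hq', rfl⟩ := hq
    exact r₀ q' hq'
  have cL : ∀ σ, (L σ).Chain' (fun q q' => q.1 ≠ q'.1) := by
    intro σ
    rw [hL]
    refine (List.isChain_map _).2 (c₀.imp ?_)
    intro q q' hne hσ
    exact hne (σ.injective hσ)
  have hlastL : ∀ σ, ∃ x, (L σ).getLast? = some x ∧ x.1 = σ im := by
    intro σ
    refine ⟨(σ im, (l₀.getLast (List.cons_ne_nil _ _)).2), ?_, rfl⟩
    rw [hL, List.getLast?_map, List.getLast?_eq_getLast (List.cons_ne_nil _ _)]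
    rfl
  have hheadL : ∀ σ, (L σ).head? = some (σ i₁, φ a * p.2) := by
    intro σ
    rw [hL, hl₀]
    rfl
  have cA : ∀ σ τ : Equiv.Perm (Fin n), σ im ≠ τ i₁ →
      (L σ ++ L τ).Chain' (fun q q' => q.1 ≠ q'.1) := by
    intro σ τ hστ
    refine List.isChain_append.2 ⟨cL σ, cL τ, ?_⟩
    intro x hx y hy
    obtain ⟨x', hx', hx'1⟩ := hlastL σ
    rw [hx'] at hx
    rw [hheadL τ] at hy
    cases hx; cases hy
    rw [hx'1]
    exact hστ
  have rA : ∀ σ τ : Equiv.Perm (Fin n), ∀ q ∈ L σ ++ L τ, q.2 ∉ Set.range φ := by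
    intro σ τ q hq
    rcases List.mem_append.1 hq with hq | hq
    · exact rL σ q hq
    · exact rL τ q hq
  have key : ∀ σ τ : Equiv.Perm (Fin n), σ i₁ ≠ τ i₁ → σ im ≠ τ i₁ → τ im ≠ σ i₁ →
      Φ σ h * Φ τ h ≠ Φ τ h * Φ σ h := by
    intro σ τ h1 h2 h3 hcomm
    have e1 : ((L σ ++ L τ).map f).prod = ((L τ ++ L σ).map f).prod := by
      simp only [List.map_append, List.prod_append]
      rw [← hΦh, ← hΦh]
      exact hcomm
    have hfst := fst_eq_of_prod_eq hφ (rA σ τ) (cA σ τ h2) (rA τ σ) (cA τ σ h3) e1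
    have := congrArg List.head? hfst
    simp only [hL, hl₀, List.map_cons, List.cons_append, List.map_append, List.head?_cons,
      Option.some.injEq] at this
    exact h1 this
  -- construction of the finset of permutations
  set K : ℕ := (n - 2) / 2 with hK
  have hbound : ∀ k : Fin K, 2 * (k : ℕ) + 1 < n := by
    intro k
    have := k.isLt
    omega
  set u : Fin K → Fin n := fun k => ⟨2 * k, by have := hbound k; omega⟩ with hu
  set v : Fin K → Fin n := fun k => ⟨2 * k + 1, hbound k⟩ with hv
  have huv : ∀ k, u k ≠ v k := by
    intro k
    simp [hu, hv, Fin.ext_iff]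
  choose e he1 he2 using fun k : Fin K => exists_perm_pair i₁ im (u k) (v k) (huv k)
  have einj : Function.Injective e := by
    intro k k' hkk'
    have : u k = u k' := by rw [← he1 k, ← he1 k', hkk']
    have := congrArg Fin.val this
    simp only [hu] at this
    exact Fin.ext (by omega)
  refine ⟨Finset.univ.image e, ?_, ?_⟩
  · rw [Finset.card_image_of_injective _ einj, Finset.card_univ, Fintype.card_fin]
  · intro σ hσ τ hτ hστ
    obtain ⟨k, -, rfl⟩ := Finset.mem_image.1 hσ
    obtain ⟨k', -, rfl⟩ := Finset.mem_image.1 hτ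
    have hk : (k : ℕ) ≠ (k' : ℕ) := by
      intro hh
      exact hστ (congrArg e (Fin.ext hh))
    apply key
    · rw [he1, he1]
      simp only [hu, Fin.ext_iff, ne_eq]
      omega
    · rw [he1 k']
      rcases he2 k with hh | hh <;> rw [hh] <;>
        simp only [hu, hv, Fin.ext_iff, ne_eq] <;> omega
    · rw [he1 k]
      rcases he2 k' with hh | hh <;> rw [hh] <;>
        simp only [hu, hv, Fin.ext_iff, ne_eq] <;> omega
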